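/- For α > −1 and real a with a > −1, a not a nonnegative integer lying in the pole set, and every natural number j ≥ 0 and n ≥ 1: the sum of residues of the meromorphic function f(u) = Γ(α+n+1−u)Γ(u)/(Γ(n+1+u)Γ(α+1−u)(u−a+j)) over all of its poles (namely u = 0, −1, ..., −n and u = a − j) equals zero. -/

import Mathlib

set_option maxHeartbeats 1000000

open Complex Filter Topology Finset

section Helpers

open Polynomial

/-- Sum of Lagrange coefficients vanishes when the degree is small. -/
lemma sum_eval_mul_nodalWeight_eq_zero {F : Type*} [Field F] {ι : Type*} [DecidableEq ι]
    (s : Finset ι) (v : ι → F) (hvs : Set.InjOn v s) (p : F[X])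
    (hdeg : p.degree < ((s.card - 1 : ℕ) : WithBot ℕ)) :
    ∑ i ∈ s, p.eval (v i) * Lagrange.nodalWeight s v i = 0 := by
  have hlt : p.degree < (s.card : WithBot ℕ) :=
    lt_of_lt_of_le hdeg (by exact_mod_cast Nat.sub_le s.card 1)
  have hp := Lagrange.eq_interpolate hvs hlt
  have h0 : p.coeff (s.card - 1) = 0 := Polynomial.coeff_eq_zero_of_degree_lt hdeg
  have hcoeff : (Lagrange.interpolate s v (fun i => p.eval (v i))).coeff (s.card - 1)
      = ∑ i ∈ s, p.eval (v i) * Lagrange.nodalWeight s v i := by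
    rw [Lagrange.interpolate_apply, Polynomial.finset_sum_coeff]
    refine Finset.sum_congr rfl fun i hi => ?_
    rw [Lagrange.basis_eq_prod_sub_inv_mul_nodal_div hi,
      ← Lagrange.nodal_erase_eq_nodal_div hi, ← mul_assoc, ← Polynomial.C_mul,
      Polynomial.coeff_C_mul]
    have hmon : (Lagrange.nodal (s.erase i) v).Monic := Lagrange.nodal_monic
    have hnd : (Lagrange.nodal (s.erase i) v).natDegree = s.card - 1 := by
      rw [Lagrange.natDegree_nodal, Finset.card_erase_of_mem hi]
    rw [← hnd, hmon.coeff_natDegree, mul_one, mul_comm]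
  rw [← hp, h0] at hcoeff
  exact hcoeff.symm

lemma exists_delta (c p : ℝ) : ∃ δ > 0, ∀ m : ℕ, c + m ≠ p → δ ≤ |p - (c + m)| := by
  rcases lt_or_ge p c with hpc | hpc
  · refine ⟨c - p, by linarith, fun m hm => ?_⟩
    rw [abs_sub_comm]
    calc c - p ≤ c + m - p := by have : (0:ℝ) ≤ m := Nat.cast_nonneg m; linarith
    _ ≤ |c + m - p| := le_abs_self _
  · set q := p - c with hq
    have hq0 : 0 ≤ q := by simp [hq]; linarith
    set M := ⌊q⌋₊ with hM
    have hMle : (M : ℝ) ≤ q := Nat.floor_le hq0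
    have hMlt : q < M + 1 := Nat.lt_floor_add_one q
    by_cases heq : q = M
    · refine ⟨1, one_pos, fun m hm => ?_⟩
      have hmM : m ≠ M := by
        intro h; apply hm; rw [h]; linarith [heq]
      have heq2 : p - (c + m) = (M : ℝ) - m := by
        have : q = p - c := hq
        rw [heq] at this; linarith
      rw [heq2]
      have hne : (M : ℤ) - (m : ℤ) ≠ 0 := sub_ne_zero.mpr (by exact_mod_cast hmM.symm)
      have h1 : (1 : ℝ) ≤ |((M - m : ℤ) : ℝ)| := by
        rw [← Int.cast_abs]
        exact_mod_cast Int.one_le_abs hne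
      calc (1:ℝ) ≤ |((M - m : ℤ) : ℝ)| := h1
      _ = |(M : ℝ) - m| := by push_cast; ring_nf
    · have hqM : (M : ℝ) < q := lt_of_le_of_ne hMle (fun h => heq h.symm)
      refine ⟨min (q - M) (M + 1 - q), lt_min (by linarith) (by linarith), fun m _ => ?_⟩
      have hpm : p - (c + m) = q - m := by rw [hq]; ring
      rw [hpm]
      rcases le_or_gt (m : ℝ) (M : ℝ) with h | h
      · calc min (q - M) (M + 1 - q) ≤ q - M := min_le_left _ _
        _ ≤ q - m := by linarith
        _ ≤ |q - m| := le_abs_self _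
      · have : (M : ℝ) + 1 ≤ m := by exact_mod_cast Nat.cast_lt.mp h
        rw [abs_sub_comm]
        calc min (q - M) (M + 1 - q) ≤ M + 1 - q := min_le_right _ _
        _ ≤ m - q := by linarith
        _ ≤ |m - q| := le_abs_self _

lemma exists_delta' (c p : ℝ) : ∃ δ > 0, ∀ m : ℕ, c - m ≠ p → δ ≤ |p - (c - m)| := by
  obtain ⟨δ, hδ, h⟩ := exists_delta (-c) (-p)
  refine ⟨δ, hδ, fun m hm => ?_⟩
  rw [show p - (c - m) = -((-p) - ((-c) + m)) by ring, abs_neg]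
  exact h m (by intro hh; apply hm; linarith)

lemma eventually_ne_add (c p : ℝ) :
    ∀ᶠ (u : ℂ) in 𝓝[≠] ((p : ℝ) : ℂ), ∀ m : ℕ, u ≠ (c : ℂ) + m := by
  obtain ⟨δ, hδ, h⟩ := exists_delta c p
  have h1 : ∀ᶠ (u : ℂ) in 𝓝 ((p : ℝ) : ℂ), dist u ((p:ℝ):ℂ) < δ :=
    Metric.eventually_nhds_iff_ball.mpr ⟨δ, hδ, fun y hy => by simpa [Metric.mem_ball] using hy⟩
  filter_upwards [h1.filter_mono nhdsWithin_le_nhds, self_mem_nhdsWithin] with u hu hne m heq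
  by_cases hc : c + m = p
  · apply hne
    rw [heq, show (c:ℂ) + m = ((c + (m:ℝ) : ℝ) : ℂ) by push_cast; ring, hc]
    rfl
  · have hle := h m hc
    have : dist u ((p:ℝ):ℂ) = |p - (c + m)| := by
      rw [heq, Complex.dist_eq, show (c:ℂ) + m - p = (((c + m - p : ℝ)) : ℂ) by push_cast; ring,
        Complex.norm_real, Real.norm_eq_abs, abs_sub_comm]
    linarith

lemma eventually_ne_sub (c p : ℝ) :
    ∀ᶠ (u : ℂ) in 𝓝[≠] ((p : ℝ) : ℂ), ∀ m : ℕ, u ≠ (c : ℂ) - m := by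
  obtain ⟨δ, hδ, h⟩ := exists_delta' c p
  have h1 : ∀ᶠ (u : ℂ) in 𝓝 ((p : ℝ) : ℂ), dist u ((p:ℝ):ℂ) < δ :=
    Metric.eventually_nhds_iff_ball.mpr ⟨δ, hδ, fun y hy => by simpa [Metric.mem_ball] using hy⟩
  filter_upwards [h1.filter_mono nhdsWithin_le_nhds, self_mem_nhdsWithin] with u hu hne m heq
  by_cases hc : c - m = p
  · apply hne
    rw [heq, show (c:ℂ) - m = ((c - (m:ℝ) : ℝ) : ℂ) by push_cast; ring, hc]
    rfl
  · have hle := h m hc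
    have : dist u ((p:ℝ):ℂ) = |p - (c - m)| := by
      rw [heq, Complex.dist_eq, show (c:ℂ) - m - p = (((c - m - p : ℝ)) : ℂ) by push_cast; ring,
        Complex.norm_real, Real.norm_eq_abs, abs_sub_comm]
    linarith

lemma Gamma_prod (z : ℂ) (n : ℕ) (h : ∀ m : ℕ, m ≤ n → z + m ≠ 0) :
    Complex.Gamma (z + n + 1) = (∏ m ∈ Finset.range (n + 1), (z + m)) * Complex.Gamma z := by
  induction n with
  | zero =>
    simpa using Complex.Gamma_add_one z (by simpa using h 0 le_rfl)
  | succ n ih =>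
    have h1 : z + (n:ℂ) + 1 ≠ 0 := by
      have := h (n + 1) le_rfl
      push_cast at this
      intro hz; exact this (by linear_combination hz)
    have h2 := ih (fun m hm => h m (hm.trans (Nat.le_succ n)))
    calc Complex.Gamma (z + (↑(n+1):ℂ) + 1) = Complex.Gamma ((z + n + 1) + 1) := by
          push_cast
          ring_nf
    _ = (z + n + 1) * Complex.Gamma (z + n + 1) := Complex.Gamma_add_one _ h1
    _ = (z + n + 1) * ((∏ m ∈ Finset.range (n+1), (z + m)) * Complex.Gamma z) := by rw [h2]
    _ = (∏ m ∈ Finset.range (n+1+1), (z + m)) * Complex.Gamma z := by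
          conv_rhs => rw [Finset.prod_range_succ]
          push_cast
          ring

end Helpers

/-- The meromorphic function appearing in the residue computation. -/
noncomputable def resFun (α a : ℝ) (n j : ℕ) (u : ℂ) : ℂ :=
  Complex.Gamma ((α : ℂ) + n + 1 - u) * Complex.Gamma u /
    (Complex.Gamma ((n : ℂ) + 1 + u) * Complex.Gamma ((α : ℂ) + 1 - u) *
      (u - (a : ℂ) + j))

lemma resFun_eq (α a : ℝ) (n j : ℕ) (hn : 1 ≤ n) (u : ℂ)
    (h1 : ∀ m : ℕ, u ≠ (0:ℂ) - m) (h2 : ∀ m : ℕ, u ≠ ((α : ℂ) + 1) + m) :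
    resFun α a n j u = (∏ i ∈ Finset.range n, ((α:ℂ) + 1 + i - u)) /
      ((∏ m ∈ Finset.range (n+1), (u + m)) * (u - (a:ℂ) + j)) := by
  have hu : Complex.Gamma u ≠ 0 := by
    refine Complex.Gamma_ne_zero fun m => ?_
    have := h1 m; rwa [zero_sub] at this
  have hc : Complex.Gamma ((α:ℂ) + 1 - u) ≠ 0 := by
    refine Complex.Gamma_ne_zero fun m => ?_
    intro hz
    exact h2 m (by linear_combination -hz)
  have hB : Complex.Gamma ((n:ℂ) + 1 + u)
      = (∏ m ∈ Finset.range (n+1), (u + m)) * Complex.Gamma u := by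
    have := Gamma_prod u n (fun m _ => by
      have := h1 m; intro hz; exact this (by linear_combination hz))
    rwa [show ((n:ℂ) + 1 + u) = u + n + 1 from by ring]
  have hA : Complex.Gamma ((α:ℂ) + n + 1 - u)
      = (∏ i ∈ Finset.range n, ((α:ℂ) + 1 + i - u)) * Complex.Gamma ((α:ℂ) + 1 - u) := by
    have harg : ∀ m : ℕ, m ≤ n - 1 → ((α:ℂ) + 1 - u) + m ≠ 0 := by
      intro m _ hz
      exact h2 m (by linear_combination -hz)
    have hprod := Gamma_prod ((α:ℂ) + 1 - u) (n-1) harg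
    have hcast : ((n - 1 : ℕ) : ℂ) = (n : ℂ) - 1 := by
      push_cast [Nat.cast_sub hn]; ring
    rw [hcast, show ((α:ℂ) + 1 - u) + ((n:ℂ) - 1) + 1 = (α:ℂ) + n + 1 - u from by ring,
      show n - 1 + 1 = n from Nat.succ_pred_eq_of_pos hn] at hprod
    rw [hprod]
    congr 1
    exact Finset.prod_congr rfl fun i _ => by ring
  have key : ∀ (X Y NN PP L : ℂ), X ≠ 0 → Y ≠ 0 →
      (NN * Y) * X / ((PP * X) * Y * L) = NN / (PP * L) := by
    intro X Y NN PP L hX hY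
    rw [show (NN*Y)*X = (X*Y)*NN from by ring, show (PP*X)*Y*L = (X*Y)*(PP*L) from by ring,
      mul_div_mul_left _ _ (mul_ne_zero hX hY)]
  unfold resFun
  rw [hA, hB]
  exact key _ _ _ _ _ hu hc

lemma residue_val (q L : ℂ) (F N P : ℂ → ℂ)
    (hNcont : ContinuousAt N q) (hPcont : ContinuousAt P q) (hden : P q ≠ 0)
    (hev : ∀ᶠ u in 𝓝[≠] q, F u = N u / P u)
    (h : Tendsto F (𝓝[≠] q) (𝓝 L)) : L = N q / P q := by
  have hcont : Tendsto (fun u => N u / P u) (𝓝[≠] q) (𝓝 (N q / P q)) :=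
    ((hNcont.div hPcont hden)).continuousWithinAt.tendsto
  exact tendsto_nhds_unique h (Tendsto.congr' (hev.mono fun u hh => hh.symm) hcont)

theorem sum_of_residues_vanishes (α a : ℝ) (hα : -1 < α) (ha : -1 < a)
    (ha2 : ∀ m : ℕ, a ≠ (m : ℝ)) (j n : ℕ) (hn : 1 ≤ n)
    (r : ℕ → ℂ) (ra : ℂ)
    (hr : ∀ k ≤ n, Tendsto (fun u : ℂ => (u + (k : ℂ)) * resFun α a n j u)
      (𝓝[≠] (-(k : ℂ))) (𝓝 (r k)))
    (hra : Tendsto (fun u : ℂ => (u - ((a : ℂ) - (j : ℂ))) * resFun α a n j u)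
      (𝓝[≠] ((a : ℂ) - (j : ℂ))) (𝓝 ra)) :
    (∑ k ∈ Finset.range (n + 1), r k) + ra = 0 := by
  classical
  set N : ℂ → ℂ := fun x => ∏ i ∈ Finset.range n, ((α:ℂ) + 1 + i - x) with hN
  have hNcont : Continuous N :=
    continuous_finset_prod _ fun i _ => continuous_const.sub continuous_id
  -- the key arithmetic fact about a
  have F1 : ∀ k : ℕ, (a:ℂ) - j ≠ -(k:ℂ) := by
    intro k h
    have hre : a - (j:ℝ) + k = 0 := by
      have : ((a - (j:ℝ) + k : ℝ) : ℂ) = 0 := by push_cast; linear_combination h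
      exact_mod_cast this
    rcases le_or_gt k j with hkj | hjk
    · exact ha2 (j - k) (by push_cast [Nat.cast_sub hkj]; linarith)
    · have : (j:ℝ) + 1 ≤ k := by exact_mod_cast hjk
      linarith
  -- eventual equality with the rational function
  have hgood : ∀ (p : ℝ), ∀ᶠ u in 𝓝[≠] ((p:ℝ):ℂ), resFun α a n j u
      = N u / ((∏ m ∈ Finset.range (n+1), (u + m)) * (u - (a:ℂ) + j)) := by
    intro p
    filter_upwards [eventually_ne_sub 0 p, eventually_ne_add (α + 1) p] with u hu1 hu2
    have hu1' : ∀ m : ℕ, u ≠ (0:ℂ) - m := by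
      intro m; have := hu1 m; simpa using this
    have hu2' : ∀ m : ℕ, u ≠ ((α:ℂ) + 1) + m := by
      intro m; have := hu2 m; rwa [show ((α + 1 : ℝ):ℂ) = (α:ℂ) + 1 from by push_cast; ring] at this
    exact resFun_eq α a n j hn u hu1' hu2'
  -- cancellation helper
  have key2 : ∀ (x A B : ℂ), x ≠ 0 → x * (A / (x * B)) = A / B := by
    intro x A B hx
    rw [← mul_div_assoc, mul_div_mul_left _ _ hx]
  -- residues at the integer poles
  have hrk : ∀ k, k ≤ n → r k = N (-(k:ℂ)) /
      ((∏ m ∈ (Finset.range (n+1)).erase k, (-(k:ℂ) + m)) * (-(k:ℂ) - a + j)) := by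
    intro k hk
    have hEcont : Continuous (fun u : ℂ => ∏ m ∈ (Finset.range (n+1)).erase k, (u + m)) :=
      continuous_finset_prod _ fun i _ => continuous_id.add continuous_const
    have hden : (∏ m ∈ (Finset.range (n+1)).erase k, (-(k:ℂ) + m)) * (-(k:ℂ) - a + j) ≠ 0 := by
      apply mul_ne_zero
      · apply Finset.prod_ne_zero_iff.mpr
        intro m hm
        have hmk : m ≠ k := (Finset.mem_erase.mp hm).1
        intro hz
        exact hmk (by exact_mod_cast (by linear_combination hz : (m:ℂ) = (k:ℂ)))
      · intro hz
        exact F1 k (by linear_combination -hz)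
    have hpt : (-(k:ℂ)) = (((-(k:ℝ)) : ℝ) : ℂ) := by push_cast; ring
    have hev : ∀ᶠ u in 𝓝[≠] (-(k:ℂ)),
        (u + (k:ℂ)) * resFun α a n j u
          = N u / ((∏ m ∈ (Finset.range (n+1)).erase k, (u + m)) * (u - (a:ℂ) + j)) := by
      rw [hpt]
      filter_upwards [hgood (-(k:ℝ)), eventually_ne_sub 0 (-(k:ℝ))] with u hu hu1
      rw [hu]
      have hk' : u + (k:ℂ) ≠ 0 := by
        intro hz
        exact hu1 k (by push_cast; linear_combination hz)
      have hsplit : ∏ m ∈ Finset.range (n+1), (u + m)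
          = (u + (k:ℂ)) * ∏ m ∈ (Finset.range (n+1)).erase k, (u + m) :=
        (Finset.mul_prod_erase _ _ (Finset.mem_range.mpr (Nat.lt_succ_of_le hk))).symm
      rw [hsplit, mul_assoc]
      exact key2 _ _ _ hk'
    exact residue_val (-(k:ℂ)) (r k) _ N
      (fun u => (∏ m ∈ (Finset.range (n+1)).erase k, (u + m)) * (u - (a:ℂ) + j))
      hNcont.continuousAt
      (hEcont.mul ((continuous_id.sub continuous_const).add continuous_const)).continuousAt
      hden hev (hr k hk)
  -- residue at a - j
  have hpa : ((a:ℂ) - (j:ℂ)) = (((a - j : ℝ)) : ℂ) := by push_cast; ring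
  have hraval : ra = N ((a:ℂ) - j) / (∏ m ∈ Finset.range (n+1), ((a:ℂ) - j + m)) := by
    have hPcont : Continuous (fun u : ℂ => ∏ m ∈ Finset.range (n+1), (u + m)) :=
      continuous_finset_prod _ fun i _ => continuous_id.add continuous_const
    have hden : (∏ m ∈ Finset.range (n+1), ((a:ℂ) - j + m)) ≠ 0 := by
      apply Finset.prod_ne_zero_iff.mpr
      intro m _ hz
      exact F1 m (by linear_combination hz)
    have hev : ∀ᶠ u in 𝓝[≠] ((a:ℂ) - (j:ℂ)),
        (u - ((a:ℂ) - (j:ℂ))) * resFun α a n j u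
          = N u / (∏ m ∈ Finset.range (n+1), (u + m)) := by
      rw [hpa]
      filter_upwards [hgood (a - j), self_mem_nhdsWithin] with u hu hne
      rw [hu]
      have hne2 : u ≠ (((a - j : ℝ)) : ℂ) := hne
      have hne' : u - ((a:ℂ) - j) ≠ 0 := by
        rw [hpa]
        exact sub_ne_zero.mpr hne2
      have h3 : u - (a:ℂ) + j = u - ((a:ℂ) - j) := by ring
      rw [h3, mul_comm (∏ m ∈ Finset.range (n+1), (u + m)), hpa]
      exact key2 _ _ _ (by rw [← hpa]; exact hne')
    have := residue_val ((a:ℂ) - (j:ℂ)) ra _ N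
      (fun u => ∏ m ∈ Finset.range (n+1), (u + m))
      hNcont.continuousAt hPcont.continuousAt hden hev hra
    simpa using this
  -- Lagrange setup
  set v : ℕ → ℂ := fun k => if k ≤ n then -(k:ℂ) else (a:ℂ) - j with hv
  have hvk : ∀ k, k ≤ n → v k = -(k:ℂ) := fun k hk => if_pos hk
  have hvlast : v (n+1) = (a:ℂ) - j := if_neg (by omega)
  have hvs : Set.InjOn v (Finset.range (n+2) : Finset ℕ) := by
    intro x hx y hy hxy
    simp only [Finset.coe_range, Set.mem_Iio] at hx hy
    rcases le_or_gt x n with hxn | hxn <;> rcases le_or_gt y n with hyn | hyn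
    · rw [hvk x hxn, hvk y hyn] at hxy
      exact_mod_cast neg_injective hxy
    · have hy1 : y = n + 1 := by omega
      rw [hvk x hxn, hy1, hvlast] at hxy
      exact absurd hxy.symm (F1 x)
    · have hx1 : x = n + 1 := by omega
      rw [hx1, hvlast, hvk y hyn] at hxy
      exact absurd hxy (F1 y)
    · omega
  set P : Polynomial ℂ := ∏ i ∈ Finset.range n, (Polynomial.C ((α:ℂ) + 1 + i) - Polynomial.X)
    with hPdef
  have hevalP : ∀ x : ℂ, P.eval x = N x := by
    intro x
    rw [hPdef, Polynomial.eval_prod]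
    exact Finset.prod_congr rfl fun i _ => by simp
  have hdegP : P.degree = n := by
    rw [hPdef, Polynomial.degree_prod]
    have : ∀ i ∈ Finset.range n,
        (Polynomial.C ((α:ℂ) + 1 + i) - Polynomial.X).degree = 1 := by
      intro i _
      rw [show Polynomial.C ((α:ℂ) + 1 + i) - Polynomial.X
        = -(Polynomial.X - Polynomial.C ((α:ℂ) + 1 + i)) from by ring, Polynomial.degree_neg,
        Polynomial.degree_X_sub_C]
    rw [Finset.sum_congr rfl this]
    simp
  have hcard : (Finset.range (n+2)).card = n + 2 := Finset.card_range _
  have hdeglt : P.degree < (((Finset.range (n+2)).card - 1 : ℕ) : WithBot ℕ) := by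
    rw [hdegP, hcard]
    exact_mod_cast Nat.lt_succ_self n
  have hsum := sum_eval_mul_nodalWeight_eq_zero (Finset.range (n+2)) v hvs P hdeglt
  rw [Finset.sum_range_succ] at hsum
  -- identify the terms
  have hterm : ∀ k ∈ Finset.range (n+1),
      P.eval (v k) * Lagrange.nodalWeight (Finset.range (n+2)) v k = r k := by
    intro k hk
    have hkn : k ≤ n := Nat.lt_succ_iff.mp (Finset.mem_range.mp hk)
    have hset : (Finset.range (n+2)).erase k = insert (n+1) ((Finset.range (n+1)).erase k) := by
      ext l
      simp only [Finset.mem_erase, Finset.mem_range, Finset.mem_insert]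
      omega
    have hnotmem : (n+1) ∉ (Finset.range (n+1)).erase k := by simp
    have hprodeq : ∏ l ∈ (Finset.range (n+1)).erase k, (v k - v l)
        = ∏ l ∈ (Finset.range (n+1)).erase k, (-(k:ℂ) + l) := by
      refine Finset.prod_congr rfl fun l hl => ?_
      have hln : l ≤ n := Nat.lt_succ_iff.mp (Finset.mem_range.mp (Finset.mem_erase.mp hl).2)
      rw [hvk k hkn, hvk l hln]
      ring
    rw [hrk k hkn, Lagrange.nodalWeight, Finset.prod_inv_distrib, hset,
      Finset.prod_insert hnotmem, hprodeq, hvk k hkn, hvlast, hevalP, div_eq_mul_inv]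
    congr 1
    congr 1
    ring
  have hlast : P.eval (v (n+1)) * Lagrange.nodalWeight (Finset.range (n+2)) v (n+1) = ra := by
    have hset : (Finset.range (n+2)).erase (n+1) = Finset.range (n+1) := by
      ext l
      simp only [Finset.mem_erase, Finset.mem_range]
      omega
    have hprodeq : ∏ l ∈ Finset.range (n+1), (v (n+1) - v l)
        = ∏ l ∈ Finset.range (n+1), ((a:ℂ) - j + l) := by
      refine Finset.prod_congr rfl fun l hl => ?_
      have hln : l ≤ n := Nat.lt_succ_iff.mp (Finset.mem_range.mp hl)
      rw [hvk l hln, hvlast]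
      ring
    rw [hraval, Lagrange.nodalWeight, Finset.prod_inv_distrib, hset, hprodeq, hvlast, hevalP,
      div_eq_mul_inv]
  rw [Finset.sum_congr rfl hterm, hlast] at hsum
  exact hsum
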